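/- If P and P' are ordered sets each possessing a greatest and a smallest element, then breadth(P × P') = breadth(P) + breadth(P'), where P × P' carries the product ordering. Moreover, if P' embeds into P as ordered sets, then breadth(P') ≤ breadth(P). -/

import Mathlib

/-- Wehrung's breadth condition: `P` has breadth at most `d`. -/
def hasBreadthLE (P : Type*) [Preorder P] (d : ℕ) : Prop :=
  ∀ x y : Fin (d + 1) → P, (∀ i j, i ≠ j → x i ≤ y j) → ∃ i, x i ≤ y i

/-- The breadth of an ordered set, as an extended natural number. -/
noncomputable def breadth (P : Type*) [Preorder P] : ℕ∞ :=
  sInf {e : ℕ∞ | ∃ d : ℕ, e = (d : ℕ∞) ∧ hasBreadthLE P d}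

section Aux

variable {P P' : Type*} [Preorder P] [Preorder P']

/-- A "bad set" of size `n`: witnesses that breadth is at least `n`. -/
def BadSet (P : Type*) [Preorder P] (n : ℕ) : Prop :=
  ∃ x y : Fin n → P, (∀ i j, i ≠ j → x i ≤ y j) ∧ ∀ i, ¬ x i ≤ y i

lemma not_hasBreadthLE_iff {d : ℕ} : ¬ hasBreadthLE P d ↔ BadSet P (d + 1) := by
  unfold hasBreadthLE BadSet
  push_neg
  rfl

lemma hasBreadthLE.mono {d e : ℕ} (h : hasBreadthLE P d) (hde : d ≤ e) :
    hasBreadthLE P e := by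
  intro x y hxy
  obtain ⟨i, hi⟩ := h (fun i => x (Fin.castLE (by omega) i)) (fun i => y (Fin.castLE (by omega) i))
    (fun i j hij => hxy _ _ (fun h => hij (Fin.castLE_injective _ h)))
  exact ⟨_, hi⟩

lemma BadSet.mono {m n : ℕ} (h : BadSet P n) (hmn : m ≤ n) : BadSet P m := by
  obtain ⟨x, y, hxy, hd⟩ := h
  exact ⟨fun i => x (Fin.castLE hmn i), fun i => y (Fin.castLE hmn i),
    fun i j hij => hxy _ _ (fun h => hij (Fin.castLE_injective hmn h)),
    fun i => hd _⟩

lemma hasBreadthLE_of_map (f : P' → P) (hf : ∀ a b, f a ≤ f b ↔ a ≤ b) {d : ℕ}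
    (h : hasBreadthLE P d) : hasBreadthLE P' d := by
  intro x y hxy
  obtain ⟨i, hi⟩ := h (f ∘ x) (f ∘ y) (fun i j hij => (hf _ _).2 (hxy i j hij))
  exact ⟨i, (hf _ _).1 hi⟩

lemma breadth_le_of (d : ℕ) (h : hasBreadthLE P d) : breadth P ≤ d :=
  sInf_le ⟨d, rfl, h⟩

lemma hasBreadthLE_prod {a b : ℕ} (ha : hasBreadthLE P a) (hb : hasBreadthLE P' b) :
    hasBreadthLE (P × P') (a + b) := by
  classical
  intro x y hxy
  by_contra hc
  push_neg at hc
  set S : Finset (Fin (a + b + 1)) := Finset.univ.filter (fun i => ¬ (x i).1 ≤ (y i).1) with hS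
  have hcard : S.card + Sᶜ.card = a + b + 1 := by
    rw [Finset.card_add_card_compl]; simp
  rcases le_or_gt S.card a with h1 | h1
  · have h2 : b + 1 ≤ Sᶜ.card := by omega
    obtain ⟨t, hts, ht⟩ := Finset.exists_subset_card_eq h2
    let f := t.orderIsoOfFin ht
    obtain ⟨i, hi⟩ := hb (fun i => (x (f i)).2) (fun i => (y (f i)).2)
      (fun i j hij => (hxy (f i) (f j) (fun h => hij (f.injective (Subtype.ext h)))).2)
    have hmem : (f i : Fin (a + b + 1)) ∈ Sᶜ := hts (f i).2
    simp only [hS, Finset.mem_compl, Finset.mem_filter, Finset.mem_univ, true_and, not_not]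
      at hmem
    exact hc (f i) ⟨hmem, hi⟩
  · obtain ⟨t, hts, ht⟩ := Finset.exists_subset_card_eq h1
    let f := t.orderIsoOfFin ht
    obtain ⟨i, hi⟩ := ha (fun i => (x (f i)).1) (fun i => (y (f i)).1)
      (fun i j hij => (hxy (f i) (f j) (fun h => hij (f.injective (Subtype.ext h)))).1)
    have hmem : (f i : Fin (a + b + 1)) ∈ S := hts (f i).2
    simp only [hS, Finset.mem_filter, Finset.mem_univ, true_and] at hmem
    exact hmem hi

lemma BadSet.prod [OrderBot P] [OrderTop P] [OrderBot P'] [OrderTop P'] {m n : ℕ}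
    (h : BadSet P m) (h' : BadSet P' n) : BadSet (P × P') (m + n) := by
  obtain ⟨x, y, hxy, hd⟩ := h
  obtain ⟨x', y', hxy', hd'⟩ := h'
  refine ⟨fun i => if h : (i : ℕ) < m then (x ⟨i, h⟩, ⊥) else (⊥, x' ⟨i - m, by omega⟩),
          fun i => if h : (i : ℕ) < m then (y ⟨i, h⟩, ⊤) else (⊤, y' ⟨i - m, by omega⟩),
          ?_, ?_⟩
  · intro i j hij
    dsimp only
    have hij' : (i : ℕ) ≠ (j : ℕ) := fun h => hij (Fin.ext h)
    by_cases hi : (i : ℕ) < m <;> by_cases hj : (j : ℕ) < m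
    · rw [dif_pos hi, dif_pos hj]
      refine Prod.mk_le_mk.2 ⟨hxy _ _ (fun h => hij' ?_), bot_le⟩
      simpa using congrArg Fin.val h
    · rw [dif_pos hi, dif_neg hj]
      exact Prod.mk_le_mk.2 ⟨le_top, bot_le⟩
    · rw [dif_neg hi, dif_pos hj]
      exact Prod.mk_le_mk.2 ⟨bot_le, le_top⟩
    · rw [dif_neg hi, dif_neg hj]
      refine Prod.mk_le_mk.2 ⟨bot_le, hxy' _ _ (fun h => hij' ?_)⟩
      have := congrArg Fin.val h
      simp only at this
      omega
  · intro i
    dsimp only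
    by_cases hi : (i : ℕ) < m
    · rw [dif_pos hi, dif_pos hi]
      exact fun h => hd _ (Prod.mk_le_mk.1 h).1
    · rw [dif_neg hi, dif_neg hi]
      exact fun h => hd' _ (Prod.mk_le_mk.1 h).2

lemma badSet_zero : BadSet P 0 :=
  ⟨Fin.elim0, Fin.elim0, fun i => i.elim0, fun i => i.elim0⟩

lemma exists_hasBreadthLE_of_ne_top (h : breadth P ≠ ⊤) : ∃ a, hasBreadthLE P a := by
  by_contra hc
  push_neg at hc
  apply h
  unfold breadth
  suffices hs : {e : ℕ∞ | ∃ d : ℕ, e = (d : ℕ∞) ∧ hasBreadthLE P d} = ∅ by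
    rw [hs]; exact sInf_empty
  ext e
  simp only [Set.mem_setOf_eq, Set.mem_empty_iff_false, iff_false, not_exists, not_and]
  exact fun d _ => hc d

end Aux

theorem stmt6 {P P' : Type*} [PartialOrder P] [PartialOrder P']
    [BoundedOrder P] [BoundedOrder P'] :
    breadth (P × P') = breadth P + breadth P' ∧
    (∀ _ : P' ↪o P, breadth P' ≤ breadth P) := by
  classical
  constructor
  · apply le_antisymm
    · by_cases hP : breadth P = ⊤
      · simp [hP]
      by_cases hP' : breadth P' = ⊤
      · simp [hP']
      obtain hexP := exists_hasBreadthLE_of_ne_top hP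
      obtain hexP' := exists_hasBreadthLE_of_ne_top hP'
      set a := Nat.find hexP with ha
      set b := Nat.find hexP' with hb
      have h1 : breadth (P × P') ≤ ((a + b : ℕ) : ℕ∞) :=
        breadth_le_of _ (hasBreadthLE_prod (Nat.find_spec hexP) (Nat.find_spec hexP'))
      have h2 : (a : ℕ∞) ≤ breadth P := by
        apply le_sInf
        rintro e ⟨d', rfl, hd'⟩
        exact_mod_cast Nat.find_min' hexP hd'
      have h3 : (b : ℕ∞) ≤ breadth P' := by
        apply le_sInf
        rintro e ⟨d', rfl, hd'⟩
        exact_mod_cast Nat.find_min' hexP' hd'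
      calc breadth (P × P') ≤ ((a + b : ℕ) : ℕ∞) := h1
        _ = (a : ℕ∞) + (b : ℕ∞) := by push_cast; ring
        _ ≤ breadth P + breadth P' := add_le_add h2 h3
    · apply le_sInf
      rintro e ⟨d, rfl, hd⟩
      have hdP : hasBreadthLE P d :=
        hasBreadthLE_of_map (fun p => (p, (⊥ : P'))) (by simp [Prod.le_def]) hd
      have hdP' : hasBreadthLE P' d :=
        hasBreadthLE_of_map (fun p => ((⊥ : P), p)) (by simp [Prod.le_def]) hd
      have hexP : ∃ a, hasBreadthLE P a := ⟨d, hdP⟩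
      have hexP' : ∃ b, hasBreadthLE P' b := ⟨d, hdP'⟩
      set a := Nat.find hexP with ha
      set b := Nat.find hexP' with hb
      have hbadP : BadSet P a := by
        rcases Nat.eq_zero_or_pos a with h0 | h0
        · rw [h0]; exact badSet_zero
        · have := Nat.find_min hexP (show a - 1 < a by omega)
          have hB := not_hasBreadthLE_iff.1 this
          rwa [show a - 1 + 1 = a by omega] at hB
      have hbadP' : BadSet P' b := by
        rcases Nat.eq_zero_or_pos b with h0 | h0
        · rw [h0]; exact badSet_zero
        · have := Nat.find_min hexP' (show b - 1 < b by omega)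
          have hB := not_hasBreadthLE_iff.1 this
          rwa [show b - 1 + 1 = b by omega] at hB
      have hab : a + b ≤ d := by
        by_contra hcon
        push_neg at hcon
        have hbad : BadSet (P × P') (d + 1) := (hbadP.prod hbadP').mono (by omega)
        exact (not_hasBreadthLE_iff.2 hbad) hd
      have h2 : breadth P ≤ (a : ℕ∞) := breadth_le_of _ (Nat.find_spec hexP)
      have h3 : breadth P' ≤ (b : ℕ∞) := breadth_le_of _ (Nat.find_spec hexP')
      calc breadth P + breadth P' ≤ (a : ℕ∞) + (b : ℕ∞) := add_le_add h2 h3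
        _ ≤ (d : ℕ∞) := by exact_mod_cast hab
  · intro f
    apply le_sInf
    rintro e ⟨d, rfl, hd⟩
    exact sInf_le ⟨d, rfl, hasBreadthLE_of_map f (fun a b => f.le_iff_le) hd⟩
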